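/- For the l⁶-norm anisotropy γ(n) = (n₁⁶+n₂⁶)^{1/6} on S¹, for all n, n̂ ∈ S¹ the inequality 1 - n₁²n₂² - 2n₁n₂n̂₁n̂₂ - ((n₁⁶+n₂⁶)²(n̂₁⁶+n̂₂⁶))^{1/3} ≥ (n₁n₂ - n̂₁n̂₂)² holds. Consequently, with k₀(n) = 2γ(n)⁻⁵(n₁⁴+n₁²n₂²+n₂⁴), the stability inequality γ(n)[(n̂^⊥)ᵀ Z_{k₀}(n) n̂^⊥] ≥ γ(n̂)² holds. -/
import Mathlib


open Matrix

/-- Clockwise rotation by π/2. -/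
noncomputable def perp (v : Fin 2 → ℝ) : Fin 2 → ℝ := ![v 1, -v 0]

/-- The l⁶-norm anisotropy on the unit circle. -/
noncomputable def gam6 (n : Fin 2 → ℝ) : ℝ := (n 0 ^ 6 + n 1 ^ 6) ^ ((1 : ℝ) / 6)

/-- The Cahn-Hoffman vector for the l⁶-norm anisotropy. -/
noncomputable def xi6 (n : Fin 2 → ℝ) : Fin 2 → ℝ := (gam6 n ^ 5)⁻¹ • ![n 0 ^ 5, n 1 ^ 5]

/-- The surface energy matrix for the l⁶-norm anisotropy with
k₀(n) = 2 γ(n)⁻⁵ (n₁⁴ + n₁² n₂² + n₂⁴). -/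
noncomputable def Z6 (n : Fin 2 → ℝ) : Matrix (Fin 2) (Fin 2) ℝ :=
  gam6 n • (1 : Matrix (Fin 2) (Fin 2) ℝ) - vecMulVec n (xi6 n) - vecMulVec (xi6 n) n
    + (2 * (gam6 n ^ 5)⁻¹ * (n 0 ^ 4 + n 0 ^ 2 * n 1 ^ 2 + n 1 ^ 4)) • vecMulVec n n

/-- AM-GM in the form needed: (x²y)^{1/3} ≤ (2x+y)/3. -/
lemma amgm_aux (x y : ℝ) (hx : 0 ≤ x) (hy : 0 ≤ y) :
    (x ^ 2 * y) ^ ((1 : ℝ) / 3) ≤ (2 * x + y) / 3 := by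
  have ht0 : 0 ≤ (2 * x + y) / 3 := by linarith
  have hcube : x ^ 2 * y ≤ ((2 * x + y) / 3) ^ 3 := by
    nlinarith [mul_nonneg (sq_nonneg (y - x)) (by linarith : (0:ℝ) ≤ y + 8 * x)]
  calc (x ^ 2 * y) ^ ((1 : ℝ) / 3) ≤ (((2 * x + y) / 3) ^ 3) ^ ((1 : ℝ) / 3) :=
        Real.rpow_le_rpow (by positivity) hcube (by norm_num)
    _ = (2 * x + y) / 3 := by
        rw [← Real.rpow_natCast ((2 * x + y) / 3) 3, ← Real.rpow_mul ht0]
        norm_num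

lemma Z6_form (n m : Fin 2 → ℝ) :
    perp m ⬝ᵥ (Z6 n).mulVec (perp m) =
      gam6 n * (m 0 ^ 2 + m 1 ^ 2)
        - 2 * (gam6 n ^ 5)⁻¹ * ((n 0 * m 1 - n 1 * m 0) * (n 0 ^ 5 * m 1 - n 1 ^ 5 * m 0))
        + 2 * (gam6 n ^ 5)⁻¹ * ((n 0 ^ 4 + n 0 ^ 2 * n 1 ^ 2 + n 1 ^ 4) * (n 0 * m 1 - n 1 * m 0) ^ 2) := by
  simp only [Z6, perp, xi6, Matrix.mulVec, dotProduct, Fin.sum_univ_two,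
    Matrix.sub_apply, Matrix.add_apply, Matrix.smul_apply, Matrix.one_apply,
    vecMulVec_apply, Pi.smul_apply, smul_eq_mul, Matrix.cons_val_zero,
    Matrix.cons_val_one, Matrix.head_cons]
  norm_num
  ring

set_option maxHeartbeats 1000000 in
/-- Key inequality and stability inequality for the l⁶-norm anisotropy. -/
theorem l6_stability (n m : Fin 2 → ℝ) (hn : n ⬝ᵥ n = 1) (hm : m ⬝ᵥ m = 1) :
    (n 0 * n 1 - m 0 * m 1) ^ 2 ≤
      1 - n 0 ^ 2 * n 1 ^ 2 - 2 * n 0 * n 1 * m 0 * m 1 -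
        ((n 0 ^ 6 + n 1 ^ 6) ^ 2 * (m 0 ^ 6 + m 1 ^ 6)) ^ ((1 : ℝ) / 3) ∧
    gam6 m ^ 2 ≤ gam6 n * (perp m ⬝ᵥ (Z6 n).mulVec (perp m)) := by
  have ha : n 0 ^ 2 + n 1 ^ 2 = 1 := by
    simpa [dotProduct, Fin.sum_univ_two, sq] using hn
  have hc : m 0 ^ 2 + m 1 ^ 2 = 1 := by
    simpa [dotProduct, Fin.sum_univ_two, sq] using hm
  set a := n 0 with hadef
  set b := n 1 with hbdef
  set c := m 0 with hcdef
  set d := m 1 with hddef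
  set x := a ^ 6 + b ^ 6 with hxdef
  set y := c ^ 6 + d ^ 6 with hydef
  set X := gam6 n with hXdef
  set M := gam6 m with hMdef
  have hXval : X = x ^ ((1 : ℝ) / 6) := rfl
  have hMval : M = y ^ ((1 : ℝ) / 6) := rfl
  clear_value a b c d
  clear_value x y X M
  have hx1 : x = 1 - 3 * (a * b) ^ 2 := by
    rw [hxdef]
    linear_combination (a ^ 4 - a ^ 2 * b ^ 2 + b ^ 4 + a ^ 2 + b ^ 2 + 1) * ha
  have hy1 : y = 1 - 3 * (c * d) ^ 2 := by
    rw [hydef]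
    linear_combination (c ^ 4 - c ^ 2 * d ^ 2 + d ^ 4 + c ^ 2 + d ^ 2 + 1) * hc
  have hab : (a * b) ^ 2 ≤ 1 / 4 := by nlinarith [sq_nonneg (a ^ 2 - b ^ 2)]
  have hcd : (c * d) ^ 2 ≤ 1 / 4 := by nlinarith [sq_nonneg (c ^ 2 - d ^ 2)]
  have hx0 : (0 : ℝ) < x := by rw [hx1]; nlinarith
  have hy0 : (0 : ℝ) < y := by rw [hy1]; nlinarith
  have hkey : (x ^ 2 * y) ^ ((1 : ℝ) / 3) ≤ 1 - 2 * (a * b) ^ 2 - (c * d) ^ 2 := by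
    have h := amgm_aux x y hx0.le hy0.le
    have : (2 * x + y) / 3 = 1 - 2 * (a * b) ^ 2 - (c * d) ^ 2 := by
      rw [hx1, hy1]; ring
    linarith [h, this.le]
  constructor
  · nlinarith [hkey]
  have hXpos : 0 < X := by rw [hXval]; positivity
  have hMpos : 0 < M := by rw [hMval]; positivity
  have hX6 : X ^ 6 = x := by
    rw [hXval, ← Real.rpow_natCast (x ^ ((1:ℝ)/6)) 6, ← Real.rpow_mul hx0.le]
    norm_num
  have hM6 : M ^ 6 = y := by
    rw [hMval, ← Real.rpow_natCast (y ^ ((1:ℝ)/6)) 6, ← Real.rpow_mul hy0.le]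
    norm_num
  set u := (X ^ 5)⁻¹ with hudef
  have hu : X ^ 5 * u = 1 := by
    rw [hudef]
    exact mul_inv_cancel₀ (pow_ne_zero 5 hXpos.ne')
  have hXu : 0 < X * u := by
    rw [hudef]
    exact mul_pos hXpos (inv_pos.mpr (pow_pos hXpos 5))
  clear_value u
  have h1 : X ^ 4 * M ^ 2 ≤ 1 - 2 * (a * b) ^ 2 - (c * d) ^ 2 := by
    have hpow : (X ^ 4 * M ^ 2) ^ 3 = x ^ 2 * y := by
      rw [show (X ^ 4 * M ^ 2) ^ 3 = (X ^ 6) ^ 2 * M ^ 6 from by ring, hX6, hM6]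
    have hnn : 0 ≤ X ^ 4 * M ^ 2 := by positivity
    have hrw : ((X ^ 4 * M ^ 2) ^ 3) ^ ((1 : ℝ) / 3) = X ^ 4 * M ^ 2 := by
      rw [← Real.rpow_natCast (X ^ 4 * M ^ 2) 3, ← Real.rpow_mul hnn]
      norm_num
    calc X ^ 4 * M ^ 2 = ((X ^ 4 * M ^ 2) ^ 3) ^ ((1 : ℝ) / 3) := hrw.symm
      _ = (x ^ 2 * y) ^ ((1 : ℝ) / 3) := by rw [hpow]
      _ ≤ _ := hkey
  have h1' : M ^ 2 ≤ (X * u) * (1 - 2 * (a * b) ^ 2 - (c * d) ^ 2) := by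
    have h2 : M ^ 2 = (X * u) * (X ^ 4 * M ^ 2) := by
      linear_combination (-(M ^ 2)) * hu
    rw [h2]
    exact mul_le_mul_of_nonneg_left h1 hXu.le
  have hexp : perp m ⬝ᵥ (Z6 n).mulVec (perp m) =
      X * (c ^ 2 + d ^ 2) - 2 * u * ((a * d - b * c) * (a ^ 5 * d - b ^ 5 * c))
        + 2 * u * ((a ^ 4 + a ^ 2 * b ^ 2 + b ^ 4) * (a * d - b * c) ^ 2) := by
    rw [Z6_form n m, ← hXdef, ← hadef, ← hbdef, ← hcdef, ← hddef, ← hudef]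
  rw [hexp]
  have heq : X * (X * (c ^ 2 + d ^ 2)
        - 2 * u * ((a * d - b * c) * (a ^ 5 * d - b ^ 5 * c))
        + 2 * u * ((a ^ 4 + a ^ 2 * b ^ 2 + b ^ 4) * (a * d - b * c) ^ 2)) =
      (X * u) * (1 - 2 * (a * b) ^ 2 - (c * d) ^ 2) + (X * u) * (a * b - c * d) ^ 2 := by
    linear_combination
      (X * u * ((a ^ 4 - a ^ 2 * b ^ 2 + b ^ 4 + a ^ 2 + b ^ 2 + 1)
          - 2 * (a * b * c * d + a * b ^ 3 * c * d + a ^ 2 - a ^ 2 * d ^ 2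
              - a ^ 2 * c ^ 2 - a ^ 2 * b ^ 2 * d ^ 2 - a ^ 2 * b ^ 2 * c ^ 2
              + a ^ 3 * b * c * d))) * ha
      + (-2 * X * u * (a ^ 4 - a ^ 2) + X ^ 2) * hc
      + (X * u) * hX6 + (X * u) * hxdef + (-(X ^ 2)) * hu
  rw [heq]
  nlinarith [h1', mul_nonneg hXu.le (sq_nonneg (a * b - c * d))]
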